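/- An involution τ of [n] is of the form σ⁻¹ ⊖ σ (if n is even) or σ⁻¹ ⊖ 1 ⊖ σ (if n is odd) for some permutation σ of [⌊n/2⌋], if and only if τ has no two independent cycles, where two cycles (a,b),(c,d) with a ≤ b = τ(a), c ≤ d = τ(c) are independent if b < c. -/

import Mathlib

/-- An involution `τ` of `[n]` is of the form `σ⁻¹ ⊖ σ` (n even) or `σ⁻¹ ⊖ 1 ⊖ σ`
(n odd) for some `σ ∈ S_{⌊n/2⌋}` iff `τ` has no two independent cycles, where cycles
`(a, τ a)` with `a ≤ τ a` and `(c, τ c)` with `c ≤ τ c` are independent if `τ a < c`. -/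
theorem skew_form_iff_no_independent_cycles (n : ℕ) (τ : Equiv.Perm (Fin n))
    (hτ : Function.Involutive ⇑τ) :
    (∃ σ : Equiv.Perm (Fin (n / 2)), ∀ i : Fin (n / 2),
        ((τ ⟨i.1, by have := i.2; omega⟩ : Fin n) : ℕ) = (n - n / 2) + ((σ.symm i : Fin (n / 2)) : ℕ) ∧
        ((τ ⟨n - n / 2 + i.1, by have := i.2; omega⟩ : Fin n) : ℕ) = ((σ i : Fin (n / 2)) : ℕ)) ↔
    ∀ a c : Fin n, a ≤ τ a → c ≤ τ c → ¬ τ a < c := by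
  constructor
  · rintro ⟨σ, hσ⟩ a c ha hc hlt
    have hlow : ∀ x : Fin n, x.1 < n / 2 → n - n / 2 ≤ (τ x).1 := by
      intro x hx
      have := (hσ ⟨x.1, hx⟩).1
      rw [Fin.eta] at this
      omega
    have hhigh : ∀ x : Fin n, n - n / 2 ≤ x.1 → (τ x).1 < n / 2 := by
      intro x hx
      have hx2 := x.2
      have := (hσ ⟨x.1 - (n - n / 2), by omega⟩).2
      have hxe : (⟨n - n / 2 + (x.1 - (n - n / 2)), by omega⟩ : Fin n) = x := by
        apply Fin.ext; simp; omega
      rw [hxe] at this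
      have := (σ ⟨x.1 - (n - n / 2), by omega⟩).2
      omega
    have hcm : ∀ x : Fin n, x ≤ τ x → x.1 ≤ n / 2 := by
      intro x hx
      by_contra hcon
      rcases le_or_gt (n - n / 2) x.1 with h1 | h1
      · have := hhigh x h1
        have := Fin.le_def.mp hx
        omega
      · omega
    have htam : n / 2 ≤ (τ a).1 := by
      rcases lt_or_ge a.1 (n / 2) with h1 | h1
      · have := hlow a h1
        omega
      · have h2 := hcm a ha
        have h3 : a.1 = n / 2 := le_antisymm h2 h1
        by_contra hcon
        push_neg at hcon
        have := hlow (τ a) hcon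
        rw [hτ a] at this
        have := Fin.le_def.mp ha
        rcases le_or_gt (n - n / 2) a.1 with h4 | h4
        · have := hhigh a h4; omega
        · omega
    have := hcm c hc
    have := Fin.lt_def.mp hlt
    omega
  · intro h
    -- S = set of lower endpoints
    set S : Finset (Fin n) := Finset.univ.filter (fun a => a.1 ≤ (τ a).1) with hS
    have hmemS : ∀ a : Fin n, a ∈ S ↔ a.1 ≤ (τ a).1 := by
      intro a; simp [hS]
    -- S is downward closed
    have hdc : ∀ a ∈ S, ∀ b : Fin n, b ≤ a → b ∈ S := by
      intro a haS b hba
      by_contra hbn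
      rw [hmemS] at hbn haS
      push_neg at hbn
      have h1 : τ b ≤ τ (τ b) := by
        rw [hτ b]; exact Fin.le_def.mpr (le_of_lt hbn)
      have h2 := h (τ b) a h1 (Fin.le_def.mpr haS)
      rw [hτ b] at h2
      have : b.1 < a.1 := by
        have := Fin.le_def.mp hba
        rcases lt_or_eq_of_le this with h3 | h3
        · exact h3
        · exfalso; have : b = a := Fin.ext h3; subst this; omega
      exact h2 (Fin.lt_def.mpr this)
    -- fixed points
    have hfix1 : ∀ a b : Fin n, τ a = a → τ b = b → a = b := by
      intro a b ha2 hb2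
      have h1 := h a b (by rw [ha2]) (by rw [hb2])
      have h2 := h b a (by rw [hb2]) (by rw [ha2])
      rw [ha2] at h1; rw [hb2] at h2
      exact le_antisymm (not_lt.mp h2) (not_lt.mp h1)
    set F : Finset (Fin n) := Finset.univ.filter (fun a => τ a = a) with hF
    have hFcard : F.card ≤ 1 := by
      apply Finset.card_le_one.mpr
      intro a haF b hbF
      simp [hF] at haF hbF
      exact hfix1 a b haF hbF
    have hFS : F ⊆ S := by
      intro a haF
      simp [hF] at haF
      rw [hmemS, haF]
    -- bijection between complement of S and S \ F
    have hcardT : (Finset.univ.filter (fun a : Fin n => ¬ a.1 ≤ (τ a).1)).card = (S \ F).card := by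
      apply Finset.card_bij (fun a _ => τ a)
      · intro a haT
        simp only [Finset.mem_filter, Finset.mem_univ, true_and, not_le] at haT
        rw [Finset.mem_sdiff, hmemS]
        refine ⟨by rw [hτ a]; omega, ?_⟩
        simp only [hF, Finset.mem_filter, Finset.mem_univ, true_and, hτ a]
        intro hcon
        rw [← hcon] at haT
        exact absurd haT (lt_irrefl _)
      · intro a _ b _ hab
        exact τ.injective hab
      · intro b hb
        rw [Finset.mem_sdiff, hmemS] at hb
        obtain ⟨hb1, hb2⟩ := hb
        have hb3 : ¬ τ b = b := by simpa [hF] using hb2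
        refine ⟨τ b, ?_, hτ b⟩
        simp only [Finset.mem_filter, Finset.mem_univ, true_and, not_le, hτ b]
        rcases lt_or_eq_of_le hb1 with h1 | h1
        · exact h1
        · exact absurd (Fin.ext h1).symm hb3
    have hST : S.card + (Finset.univ.filter (fun a : Fin n => ¬ a.1 ≤ (τ a).1)).card = n := by
      rw [hS, Finset.card_filter_add_card_filter_not]
      simp
    have hSF : (S \ F).card = S.card - F.card := Finset.card_sdiff_of_subset hFS
    have hFcard2 : F.card ≤ S.card := Finset.card_le_card hFS
    have hScard : S.card = n - n / 2 ∧ F.card = n - 2 * (n / 2) := by omega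
    -- membership characterization
    have hchar : ∀ a : Fin n, a ∈ S ↔ a.1 < n - n / 2 := by
      intro a
      constructor
      · intro haS
        have h1 : Finset.Iic a ⊆ S := by
          intro b hb
          exact hdc a haS b (Finset.mem_Iic.mp hb)
        have := Finset.card_le_card h1
        rw [Fin.card_Iic] at this
        omega
      · intro hlt2
        by_contra haS
        have h1 : S ⊆ Finset.Iio a := by
          intro b hbS
          rw [Finset.mem_Iio]
          by_contra hba
          exact haS (hdc b hbS a (not_lt.mp hba))
        have := Finset.card_le_card h1
        rw [Fin.card_Iio] at this
        omega
    -- middle: a ≥ k → τ a < m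
    have hhigh : ∀ a : Fin n, n - n / 2 ≤ a.1 → (τ a).1 < n / 2 := by
      intro a hka
      have haS : a ∉ S := by rw [hchar]; omega
      rw [hmemS] at haS
      push_neg at haS
      have htaS : τ a ∈ S := by
        rw [hmemS, hτ a]; omega
      rw [hchar] at htaS
      by_contra hcon
      push_neg at hcon
      -- then n odd, (τ a).1 = n/2 = k - 1, and a fixed point exists which is max of S
      have hodd : n - n / 2 = n / 2 + 1 := by omega
      have hFone : F.Nonempty := by
        rw [← Finset.card_pos]; omega
      obtain ⟨p, hp⟩ := hFone
      simp [hF] at hp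
      have hpmax : ∀ c ∈ S, c.1 ≤ p.1 := by
        intro c hcS
        rw [hmemS] at hcS
        have := h p c (by rw [hp]) (Fin.le_def.mpr hcS)
        rw [hp] at this
        exact not_lt.mp (fun hx => this (Fin.lt_def.mpr hx))
      have hpS : p ∈ S := hFS (by simp [hF, hp])
      rw [hchar] at hpS
      have h2 := hpmax (τ a) (by rw [hmemS, hτ a]; omega)
      have hpval : p.1 = (τ a).1 := by omega
      have hpe : p = τ a := Fin.ext hpval
      subst hpe
      rw [hτ a] at hp
      have h9 := congrArg Fin.val hp
      omega
    have hlow : ∀ a : Fin n, a.1 < n / 2 → n - n / 2 ≤ (τ a).1 := by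
      intro a ham
      have haS : a ∈ S := by rw [hchar]; omega
      rw [hmemS] at haS
      by_contra hcon
      push_neg at hcon
      have htaS : τ a ∈ S := by rw [hchar]; omega
      rw [hmemS, hτ a] at htaS
      have hfxd : τ a = a := Fin.ext (by omega)
      rcases Nat.even_or_odd n with he | ho
      · obtain ⟨t, ht⟩ := he
        have hF0 : F.card = 0 := by omega
        have haF : a ∈ F := by simp [hF, hfxd]
        rw [Finset.card_eq_zero] at hF0
        rw [hF0] at haF
        exact absurd haF (Finset.notMem_empty a)
      · obtain ⟨t, ht⟩ := ho
        have hmn : n / 2 < n := by omega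
        have hcS : (⟨n / 2, hmn⟩ : Fin n) ∈ S := by
          rw [hchar]; show n / 2 < n - n / 2; omega
        have hcS2 := (hmemS _).mp hcS
        have h5 := h a ⟨n / 2, hmn⟩ (by rw [hfxd]) (Fin.le_def.mpr hcS2)
        rw [hfxd] at h5
        exact h5 (Fin.lt_def.mpr (by simpa using ham))
    -- construct σ
    have hkn : ∀ i : Fin (n / 2), n - n / 2 + i.1 < n := by intro i; have := i.2; omega
    have hin : ∀ i : Fin (n / 2), i.1 < n := by intro i; have := i.2; omega
    refine ⟨⟨fun i => ⟨(τ ⟨n - n / 2 + i.1, hkn i⟩).1, hhigh _ (by simp)⟩,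
            fun i => ⟨(τ ⟨i.1, hin i⟩).1 - (n - n / 2), by
              have h1 := hlow ⟨i.1, hin i⟩ (by simpa using i.2)
              have h2 := (τ ⟨i.1, hin i⟩).2
              omega⟩, ?_, ?_⟩, ?_⟩
    · intro i
      apply Fin.ext
      simp only
      have h1 : (⟨(τ ⟨n - n / 2 + i.1, hkn i⟩).1, by exact (τ _).2⟩ : Fin n) = τ ⟨n - n / 2 + i.1, hkn i⟩ := Fin.eta _ _
      rw [h1, hτ]
      simp
    · intro i
      have h1 := hlow ⟨i.1, hin i⟩ (by simpa using i.2)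
      have key : ∀ (v : ℕ) (hv : v < n), v = (τ ⟨i.1, hin i⟩).1 → (τ ⟨v, hv⟩).1 = i.1 := by
        intro v hv hve
        have hz : (⟨v, hv⟩ : Fin n) = τ ⟨i.1, hin i⟩ := Fin.ext hve
        rw [hz, hτ]
      apply Fin.ext
      exact key _ _ (by beta_reduce; simp only [Fin.val_mk]; omega)
    · intro i
      constructor
      · simp only [Equiv.symm]
        have h1 := hlow ⟨i.1, hin i⟩ (by simpa using i.2)
        simp only [Equiv.coe_fn_mk]
        omega
      · rfl
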